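/- arXiv:2601.18813 — 6 statements merged into one kernel-verified Lean document; each statement's English description precedes it below -/
import Mathlib

section
/- Let b be a square both of whose coordinates lie in {1,...,6} (a black king not on the edge of the board), let K be a square with K ≠ b that is not king-adjacent to b (the white king), and let r be a square with r ≠ b and r ≠ K (a white rook). Then there exists a square s that is king-adjacent to b such that s ≠ K, s is not king-adjacent to K, and the rook on r does not attack s given blockers {K}. (This is the formal core of the paper's Lemma 9: a lone white king and rook can never checkmate or stalemate a black king that is not on the edge — the black king always has a safe move, possibly capturing an undefended rook, since a rook never attacks its own square.) -/
/-- A chessboard square: (file, rank) coordinates. -/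
abbrev Square := Fin 8 × Fin 8

/-- File of a square, as an integer. -/
def fz (s : Square) : ℤ := (s.1 : ℤ)

/-- Rank of a square, as an integer. -/
def rz (s : Square) : ℤ := (s.2 : ℤ)

/-- A square as a point of `ℤ × ℤ`. -/
def zpt (s : Square) : ℤ × ℤ := (fz s, rz s)

/-- Chebyshev distance between two squares. -/
def cheb (p q : Square) : ℤ := max |fz p - fz q| |rz p - rz q|

/-- Two squares are king-adjacent: distinct and at Chebyshev distance exactly 1. -/
def kingAdj (p q : Square) : Prop := p ≠ q ∧ cheb p q = 1

/-- `t` lies strictly between `p` and `q` on the line through `p` and `q`: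
`t` is collinear with `p` and `q`, distinct from both, and lies within the
bounding box of the segment. -/
def strictlyBetween (p t q : ℤ × ℤ) : Prop :=
  (t.1 - p.1) * (q.2 - p.2) = (t.2 - p.2) * (q.1 - p.1) ∧
  t ≠ p ∧ t ≠ q ∧
  min p.1 q.1 ≤ t.1 ∧ t.1 ≤ max p.1 q.1 ∧
  min p.2 q.2 ≤ t.2 ∧ t.2 ≤ max p.2 q.2

/-- A rook on `r` attacks `s` given blockers `B`: `r ≠ s`, they share a file or
a rank, and no blocker lies strictly between them on that line. -/
def rookAttacks (B : Set Square) (r s : Square) : Prop :=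
  r ≠ s ∧ (r.1 = s.1 ∨ r.2 = s.2) ∧
  ∀ t ∈ B, ¬ strictlyBetween (zpt r) (zpt t) (zpt s)

/-- A queen on `q` attacks `s` given blockers `B`: `q ≠ s`, they share a file,
a rank, or a diagonal, and no blocker lies strictly between them on that line. -/
def queenAttacks (B : Set Square) (q s : Square) : Prop :=
  q ≠ s ∧ (q.1 = s.1 ∨ q.2 = s.2 ∨ |fz q - fz s| = |rz q - rz s|) ∧
  ∀ t ∈ B, ¬ strictlyBetween (zpt q) (zpt t) (zpt s)

lemma max_abs_eq_one {a c : ℤ} (ha : |a| ≤ 1) (hc : |c| ≤ 1) (h : a ≠ 0 ∨ c ≠ 0) :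
    max |a| |c| = 1 := by
  have h1 : 1 ≤ max |a| |c| :=
    le_max_iff.mpr (h.imp (fun h => Int.one_le_abs h) (fun h => Int.one_le_abs h))
  have h2 : max |a| |c| ≤ 1 := max_le ha hc
  omega

lemma four_cases {a c : ℤ} (h0 : a ≠ 0 ∨ c ≠ 0) (h1 : max |a| |c| ≠ 1) :
    2 ≤ a ∨ a ≤ -2 ∨ 2 ≤ c ∨ c ≤ -2 := by
  have hm1 : 1 ≤ max |a| |c| :=
    le_max_iff.mpr (h0.imp (fun h => Int.one_le_abs h) (fun h => Int.one_le_abs h))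
  have hm2 : 2 ≤ max |a| |c| := lt_of_le_of_ne hm1 (Ne.symm h1)
  rcases le_max_iff.mp hm2 with h | h <;> rcases le_abs.mp h with h | h <;> omega

lemma mk_safe (b K r : Square) (n1 n2 : ℕ) (h1 : n1 < 8) (h2 : n2 < 8)
    (hb1 : (n1 : ℤ) ≤ fz b + 1) (hb1' : fz b - 1 ≤ (n1 : ℤ))
    (hb2 : (n2 : ℤ) ≤ rz b + 1) (hb2' : rz b - 1 ≤ (n2 : ℤ))
    (hne : (n1 : ℤ) ≠ fz b ∨ (n2 : ℤ) ≠ rz b)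
    (hK : fz K + 2 ≤ (n1 : ℤ) ∨ (n1 : ℤ) ≤ fz K - 2 ∨
          rz K + 2 ≤ (n2 : ℤ) ∨ (n2 : ℤ) ≤ rz K - 2)
    (hr1 : (n1 : ℤ) ≠ fz r) (hr2 : (n2 : ℤ) ≠ rz r) :
    ∃ s : Square, kingAdj s b ∧ s ≠ K ∧ ¬ kingAdj s K ∧ ¬ rookAttacks {K} r s := by
  set s : Square := (⟨n1, h1⟩, ⟨n2, h2⟩) with hs
  have e1 : fz s = (n1 : ℤ) := rfl
  have e2 : rz s = (n2 : ℤ) := rfl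
  refine ⟨s, ⟨?_, ?_⟩, ?_, ?_, ?_⟩
  · intro h
    rw [← h] at hne
    rw [e1, e2] at hne
    simp at hne
  · show max |fz s - fz b| |rz s - rz b| = 1
    rw [e1, e2]
    apply max_abs_eq_one
    · rw [abs_le]; omega
    · rw [abs_le]; omega
    · rcases hne with h | h
      · exact Or.inl (by omega)
      · exact Or.inr (by omega)
  · intro h
    rw [← h, e1, e2] at hK
    omega
  · rintro ⟨-, hch⟩
    have hch' : max |fz s - fz K| |rz s - rz K| = 1 := hch
    have l1 : |fz s - fz K| ≤ 1 := hch' ▸ le_max_left _ _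
    have l2 : |rz s - rz K| ≤ 1 := hch' ▸ le_max_right _ _
    rw [e1] at l1
    rw [e2] at l2
    rw [abs_le] at l1 l2
    omega
  · rintro ⟨-, hline, -⟩
    rcases hline with h | h
    · apply hr1
      have : fz r = fz s := congrArg (fun x : Fin 8 => (x : ℤ)) h
      rw [e1] at this
      exact this.symm
    · apply hr2
      have : rz r = rz s := congrArg (fun x : Fin 8 => (x : ℤ)) h
      rw [e2] at this
      exact this.symm

/-- A lone white king and rook can never checkmate or stalemate a black king
that is not on the edge of the board: the black king always has a safe move. -/
theorem black_king_not_on_edge_has_safe_square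
    (b K r : Square)
    (hb1 : 1 ≤ (b.1 : ℕ)) (hb1' : (b.1 : ℕ) ≤ 6)
    (hb2 : 1 ≤ (b.2 : ℕ)) (hb2' : (b.2 : ℕ) ≤ 6)
    (hKb : K ≠ b) (hKadj : ¬ kingAdj K b)
    (hrb : r ≠ b) (hrK : r ≠ K) :
    ∃ s : Square, kingAdj s b ∧ s ≠ K ∧ ¬ kingAdj s K ∧
      ¬ rookAttacks {K} r s := by
  have hfb : fz b = ((b.1 : ℕ) : ℤ) := rfl
  have hrb' : rz b = ((b.2 : ℕ) : ℤ) := rfl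
  have hfK : fz K = ((K.1 : ℕ) : ℤ) := rfl
  have hrK' : rz K = ((K.2 : ℕ) : ℤ) := rfl
  have hfr : fz r = ((r.1 : ℕ) : ℤ) := rfl
  have hrr : rz r = ((r.2 : ℕ) : ℤ) := rfl
  have hne0 : fz K - fz b ≠ 0 ∨ rz K - rz b ≠ 0 := by
    by_contra h
    push_neg at h
    apply hKb
    have e1 : K.1 = b.1 := Fin.ext (by omega)
    have e2 : K.2 = b.2 := Fin.ext (by omega)
    exact Prod.ext e1 e2
  have hne1 : max |fz K - fz b| |rz K - rz b| ≠ 1 := fun h => hKadj ⟨hKb, h⟩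
  have h4 := four_cases hne0 hne1
  rcases h4 with h | h | h | h
  · -- K to the east: fz K ≥ fz b + 2
    refine mk_safe b K r (if (r.1 : ℕ) = (b.1 : ℕ) then (b.1 : ℕ) - 1 else (b.1 : ℕ))
      (if (r.2 : ℕ) = (b.2 : ℕ) - 1 then (b.2 : ℕ) + 1 else (b.2 : ℕ) - 1)
      (by split_ifs <;> omega) (by split_ifs <;> omega) ?_ ?_ ?_ ?_ ?_ ?_ ?_ ?_ <;>
      split_ifs with h1 h2 <;> push_cast <;> omega
  · -- K to the west
    refine mk_safe b K r (if (r.1 : ℕ) = (b.1 : ℕ) then (b.1 : ℕ) + 1 else (b.1 : ℕ))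
      (if (r.2 : ℕ) = (b.2 : ℕ) - 1 then (b.2 : ℕ) + 1 else (b.2 : ℕ) - 1)
      (by split_ifs <;> omega) (by split_ifs <;> omega) ?_ ?_ ?_ ?_ ?_ ?_ ?_ ?_ <;>
      split_ifs with h1 h2 <;> push_cast <;> omega
  · -- K to the north
    refine mk_safe b K r (if (r.1 : ℕ) = (b.1 : ℕ) - 1 then (b.1 : ℕ) + 1 else (b.1 : ℕ) - 1)
      (if (r.2 : ℕ) = (b.2 : ℕ) then (b.2 : ℕ) - 1 else (b.2 : ℕ))
      (by split_ifs <;> omega) (by split_ifs <;> omega) ?_ ?_ ?_ ?_ ?_ ?_ ?_ ?_ <;>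
      split_ifs with h1 h2 <;> push_cast <;> omega
  · -- K to the south
    refine mk_safe b K r (if (r.1 : ℕ) = (b.1 : ℕ) - 1 then (b.1 : ℕ) + 1 else (b.1 : ℕ) - 1)
      (if (r.2 : ℕ) = (b.2 : ℕ) then (b.2 : ℕ) + 1 else (b.2 : ℕ))
      (by split_ifs <;> omega) (by split_ifs <;> omega) ?_ ?_ ?_ ?_ ?_ ?_ ?_ ?_ <;>
      split_ifs with h1 h2 <;> push_cast <;> omega
end

section
/- Let a and b be natural numbers with 2 ≤ a ≤ 7 and 2 ≤ b ≤ 7, and regard (1,b), (a,1), and (a,b) as squares (in the paper's setup the white king is at (0,0), the white queen at (a,b), the target square is (1,1), and (1,b), (a,1) are the two waypoints of the queen's two rook-like routes to the target). Suppose s is a square with s ≠ (a,b) that is king-adjacent to both waypoints (1,b) and (a,1) (a black king threatening both waypoints). Then a ≤ 3, b ≤ 3, and s is king-adjacent to (a,b); in particular the queen on (a,b) could immediately capture the black king on s. (This is the key case analysis in the proof of the paper's Lemma 5.) -/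
/-- If a black king threatens both waypoints `(1,b)` and `(a,1)` of the queen's
two rook-like routes from `(a,b)` to `(1,1)` (with `2 ≤ a,b ≤ 7`), then
`a ≤ 3`, `b ≤ 3`, and the black king stands next to the queen, so the queen
can capture it. -/
theorem both_waypoints_threatened_implies_capture
    (a b : Fin 8)
    (ha2 : 2 ≤ (a : ℕ)) (ha7 : (a : ℕ) ≤ 7)
    (hb2 : 2 ≤ (b : ℕ)) (hb7 : (b : ℕ) ≤ 7)
    (s : Square) (hs : s ≠ (a, b))
    (h1 : kingAdj s ((1 : Fin 8), b))
    (h2 : kingAdj s (a, (1 : Fin 8))) :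
    (a : ℕ) ≤ 3 ∧ (b : ℕ) ≤ 3 ∧ kingAdj s (a, b) := by
  obtain ⟨x, y⟩ := s
  simp only [kingAdj, cheb, fz, rz, Prod.ext_iff, Ne, Prod.mk.injEq, not_and,
    Fin.ext_iff, Int.abs_eq_natAbs, Fin.val_one] at *
  omega
end

section
/- Let the black king be on the square b = (x,7) of the last rank, and let two white rooks be on r₁ = (a,6) and r₂ = (c,7), where the integer distances satisfy |a − x| ≥ 2 and |c − x| ≥ 2 (so neither rook is king-adjacent to the black king and can be captured). Then b is attacked by the rook on r₂ given blockers {r₁, r₂}, and every square s that is king-adjacent to b is attacked by the rook on r₁ or by the rook on r₂ given blockers {r₁, r₂} (the black king is not counted as a blocker because it vacates b when it moves). Hence the black king has no safe square and is lost. (This is the mate pattern concluding the staircase strategy in the paper's Lemma 18 for king and two rooks versus king.) -/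
instance (p t q : ℤ × ℤ) : Decidable (strictlyBetween p t q) := by
  unfold strictlyBetween; infer_instance

instance (p q : Square) : Decidable (kingAdj p q) := by
  unfold kingAdj cheb; infer_instance

instance (r₁ r₂ r s : Square) : Decidable (rookAttacks {r₁, r₂} r s) :=
  decidable_of_iff (r ≠ s ∧ (r.1 = s.1 ∨ r.2 = s.2) ∧
      ¬ strictlyBetween (zpt r) (zpt r₁) (zpt s) ∧
      ¬ strictlyBetween (zpt r) (zpt r₂) (zpt s)) (by
    unfold rookAttacks
    simp [Set.mem_insert_iff, Set.mem_singleton_iff])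

set_option maxRecDepth 10000 in
lemma decAux : ∀ x a c : Fin 8, 2 ≤ |(a : ℤ) - (x : ℤ)| → 2 ≤ |(c : ℤ) - (x : ℤ)| →
    (rookAttacks {((a, 6) : Square), ((c, 7) : Square)} ((c, 7) : Square) ((x, 7) : Square) ∧
      ∀ s : Square, kingAdj s ((x, 7) : Square) →
        rookAttacks {((a, 6) : Square), ((c, 7) : Square)} ((a, 6) : Square) s ∨
        rookAttacks {((a, 6) : Square), ((c, 7) : Square)} ((c, 7) : Square) s) := by decide

/-- The two-rook mate pattern on the last rank: with the black king on `(x,7)`,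
rooks on `(a,6)` and `(c,7)` both at file-distance at least 2 from the black
king, the black king is attacked and every adjacent square is attacked. -/
theorem two_rooks_last_rank_mate
    (x a c : Fin 8)
    (ha : 2 ≤ |(a : ℤ) - (x : ℤ)|) (hc : 2 ≤ |(c : ℤ) - (x : ℤ)|)
    (b r₁ r₂ : Square)
    (hb : b = (x, 7)) (h1 : r₁ = (a, 6)) (h2 : r₂ = (c, 7)) :
    rookAttacks {r₁, r₂} r₂ b ∧
      ∀ s : Square, kingAdj s b →
        rookAttacks {r₁, r₂} r₁ s ∨ rookAttacks {r₁, r₂} r₂ s := by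
  subst hb h1 h2
  exact decAux x a c ha hc
end

section
/- Let the black king be on the square b = (x,7) of the last rank, let the white queen be on q = (x,6) (directly below the black king), and let the white king be on a square K that is king-adjacent to q but not king-adjacent to b. Then b is attacked by the queen on q given blockers {K}, the queen's square q is king-adjacent to K (so the queen is defended), and every square s that is king-adjacent to b satisfies: s = q, or s = K, or s is king-adjacent to K, or s is attacked by the queen on q given blockers {K}. Hence the black king has no safe square and is lost. (This is the protected-queen mate pattern used to finish the king-and-queen-versus-king strategy in the paper's Lemmas 12 and 13.) -/

def qa1 (K q s : Square) : Prop :=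
  q ≠ s ∧ (q.1 = s.1 ∨ q.2 = s.2 ∨ |fz q - fz s| = |rz q - rz s|) ∧
  ¬ strictlyBetween (zpt q) (zpt K) (zpt s)

lemma qa1_iff (K q s : Square) : queenAttacks {K} q s ↔ qa1 K q s := by
  simp [queenAttacks, qa1]

instance (K q s : Square) : Decidable (qa1 K q s) := by
  unfold qa1 strictlyBetween; infer_instance

set_option maxRecDepth 10000 in
lemma key : ∀ (x : Fin 8) (K : Square), kingAdj K (x,6) → ¬ kingAdj K (x,7) →
    qa1 K (x,6) (x,7) ∧ kingAdj (x,6) K ∧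
      ∀ s : Square, kingAdj s (x,7) →
        s = (x,6) ∨ s = K ∨ kingAdj s K ∨ qa1 K (x,6) s := by decide

/-- The protected-queen mate pattern: black king on `(x,7)`, white queen on
`(x,6)`, white king adjacent to the queen but not to the black king. Then the
black king is attacked and has no safe square. -/
theorem protected_queen_mate
    (x : Fin 8) (b q K : Square)
    (hb : b = (x, 7)) (hq : q = (x, 6))
    (hKq : kingAdj K q) (hKb : ¬ kingAdj K b) :
    queenAttacks {K} q b ∧ kingAdj q K ∧
      ∀ s : Square, kingAdj s b →
        s = q ∨ s = K ∨ kingAdj s K ∨ queenAttacks {K} q s := by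
  subst hb hq
  obtain ⟨h1, h2, h3⟩ := key x K hKq hKb
  exact ⟨(qa1_iff _ _ _).2 h1, h2, fun s hs =>
    (h3 s hs).imp id (Or.imp id (Or.imp id (qa1_iff _ _ _).2))⟩
end

section
/- Let two white rooks be on squares r₁ = (a, y₁) and r₂ = (c, y₂) with y₁ ≠ y₂ (two distinct ranks), and let the white king be on a square K whose rank is different from both y₁ and y₂. Then every square s whose rank is y₁ or y₂ and which is different from r₁ and r₂ is attacked by the rook on r₁ or by the rook on r₂ given blockers {r₁, r₂, K}. (This is the invariant used in the paper's Lemma 17: the two rooks fully cover the two ranks ahead of the white king, so the king can safely advance between them towards the edge.) -/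

lemma notSB_self (p q : ℤ × ℤ) : ¬ strictlyBetween p p q := by
  rintro ⟨-, h, -⟩; exact h rfl

lemma notSB_rank {p t q : ℤ × ℤ} (hpq : p.2 = q.2) (ht : t.2 ≠ p.2) :
    ¬ strictlyBetween p t q := by
  rintro ⟨-, -, -, -, -, h5, h6⟩
  rw [hpq] at h5 ht
  simp at h5
  omega

lemma rank_cover (x y : Fin 8) (r₂ K : Square) (hr2 : (r₂.2 : ℤ) ≠ (y : ℤ))
    (hK : (K.2 : ℤ) ≠ (y : ℤ)) (s : Square) (hs : s.2 = y) (hne : s ≠ (x, y)) :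
    rookAttacks {(x, y), r₂, K} (x, y) s := by
  refine ⟨fun h => hne h.symm, Or.inr (by simp [hs]), ?_⟩
  rintro t (rfl | rfl | rfl)
  · exact notSB_self _ _
  · exact notSB_rank (by simp [zpt, rz, hs]) (by simpa [zpt, rz] using hr2)
  · exact notSB_rank (by simp [zpt, rz, hs]) (by simpa [zpt, rz] using hK)

/-- Two rooks on two distinct ranks, with the white king on a third rank,
together attack every other square of those two ranks. -/
theorem two_rooks_cover_two_ranks
    (a c y₁ y₂ : Fin 8) (hy : y₁ ≠ y₂)
    (K : Square) (hK1 : K.2 ≠ y₁) (hK2 : K.2 ≠ y₂)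
    (r₁ r₂ : Square) (h1 : r₁ = (a, y₁)) (h2 : r₂ = (c, y₂)) :
    ∀ s : Square, (s.2 = y₁ ∨ s.2 = y₂) → s ≠ r₁ → s ≠ r₂ →
      rookAttacks {r₁, r₂, K} r₁ s ∨ rookAttacks {r₁, r₂, K} r₂ s := by
  subst h1 h2
  intro s hs hs1 hs2
  rcases hs with hs | hs
  · left
    exact rank_cover a y₁ (c, y₂) K (by simpa using fun h => hy (Fin.ext h).symm)
      (by simpa using fun h => hK1 (Fin.ext h)) s hs hs1
  · right
    have := rank_cover c y₂ (a, y₁) K (by simpa using fun h => hy (Fin.ext h))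
      (by simpa using fun h => hK2 (Fin.ext h)) s hs hs2
    refine ⟨this.1, this.2.1, ?_⟩
    intro t ht
    apply this.2.2
    rcases ht with rfl | rfl | rfl
    · exact Or.inr (Or.inl rfl)
    · exact Or.inl rfl
    · exact Or.inr (Or.inr rfl)
end

section
/- Let two white rooks be on squares r₁ = (a, y) and r₂ = (c, y) on a common rank y with a ≠ c, and let the white king be on a square K whose rank is different from y. Then the rook on r₁ attacks r₂ and the rook on r₂ attacks r₁ given blockers {r₁, r₂, K} (the rooks cover each other), and every square (x, y) on rank y with x ∉ {a, c} is attacked by the rook on r₁ or by the rook on r₂ given blockers {r₁, r₂, K}. (This is the configuration established in the paper's Lemma 16: two mutually covering rooks on one rank not containing their own king dominate that entire rank.) -/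
lemma notSB_offrank (p q t : Square) (hpq : p.2 = q.2) (ht : t.2 ≠ p.2) :
    ¬ strictlyBetween (zpt p) (zpt t) (zpt q) := by
  rintro ⟨-, -, -, -, -, h6, h7⟩
  simp only [zpt, fz, rz, hpq, min_self, max_self] at h6 h7
  exact ht (Fin.ext (by omega))

/-- Two rooks on a common rank not containing their own king cover each other
and dominate that entire rank. -/
theorem two_rooks_on_one_rank
    (a c y : Fin 8) (hac : a ≠ c)
    (K : Square) (hK : K.2 ≠ y)
    (r₁ r₂ : Square) (h1 : r₁ = (a, y)) (h2 : r₂ = (c, y)) :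
    rookAttacks {r₁, r₂, K} r₁ r₂ ∧ rookAttacks {r₁, r₂, K} r₂ r₁ ∧
      ∀ x : Fin 8, x ≠ a → x ≠ c →
        rookAttacks {r₁, r₂, K} r₁ (x, y) ∨
          rookAttacks {r₁, r₂, K} r₂ (x, y) := by
  subst h1 h2
  have hacZ : (a : ℤ) ≠ (c : ℤ) := fun h => hac (Fin.ext (by omega))
  refine ⟨⟨?_, Or.inr rfl, ?_⟩, ⟨?_, Or.inr rfl, ?_⟩, ?_⟩
  · exact fun h => hac (congrArg Prod.fst h)
  · rintro t ht
    simp only [Set.mem_insert_iff, Set.mem_singleton_iff] at ht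
    rcases ht with rfl | rfl | rfl
    · rintro ⟨-, h2, -⟩; exact h2 rfl
    · rintro ⟨-, -, h3, -⟩; exact h3 rfl
    · exact notSB_offrank _ _ _ rfl hK
  · exact fun h => hac (congrArg Prod.fst h).symm
  · rintro t ht
    simp only [Set.mem_insert_iff, Set.mem_singleton_iff] at ht
    rcases ht with rfl | rfl | rfl
    · rintro ⟨-, -, h3, -⟩; exact h3 rfl
    · rintro ⟨-, h2, -⟩; exact h2 rfl
    · exact notSB_offrank _ _ _ rfl hK
  · intro x hxa hxc
    have hxaZ : (x : ℤ) ≠ (a : ℤ) := fun h => hxa (Fin.ext (by omega))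
    have hxcZ : (x : ℤ) ≠ (c : ℤ) := fun h => hxc (Fin.ext (by omega))
    by_cases hmid : min (a : ℤ) (x : ℤ) ≤ (c : ℤ) ∧ (c : ℤ) ≤ max (a : ℤ) (x : ℤ)
    · right
      refine ⟨fun h => hxc (congrArg Prod.fst h).symm, Or.inr rfl, ?_⟩
      rintro t ht
      simp only [Set.mem_insert_iff, Set.mem_singleton_iff] at ht
      rcases ht with rfl | rfl | rfl
      · rintro ⟨-, -, -, h4, h5, -⟩
        simp only [zpt, fz, rz] at h4 h5
        omega
      · rintro ⟨-, h2, -⟩; exact h2 rfl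
      · exact notSB_offrank _ _ _ rfl hK
    · left
      refine ⟨fun h => hxa (congrArg Prod.fst h).symm, Or.inr rfl, ?_⟩
      rintro t ht
      simp only [Set.mem_insert_iff, Set.mem_singleton_iff] at ht
      rcases ht with rfl | rfl | rfl
      · rintro ⟨-, h2, -⟩; exact h2 rfl
      · rintro ⟨-, -, -, h4, h5, -⟩
        simp only [zpt, fz, rz] at h4 h5
        omega
      · exact notSB_offrank _ _ _ rfl hK
end
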